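/- Let X be an arbitrary 2×2 real matrix and let π(X) be a minimizer over W ∈ SO(2) of ‖X − W‖_F². Then for any R ∈ SO(2), ‖π(X) − R‖_F ≤ 2‖X − R‖_F. -/

import Mathlib

open Matrix

/-- `SO(2)`: real 2×2 orthogonal matrices with determinant 1. -/
def SO2 (R : Matrix (Fin 2) (Fin 2) ℝ) : Prop := R * Rᵀ = 1 ∧ R.det = 1

/-- Squared Frobenius norm of a 2×2 real matrix. -/
def frobSq (X : Matrix (Fin 2) (Fin 2) ℝ) : ℝ := ∑ i, ∑ j, (X i j) ^ 2

/-- Frobenius norm of a 2×2 real matrix. -/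
noncomputable def frob (X : Matrix (Fin 2) (Fin 2) ℝ) : ℝ := Real.sqrt (frobSq X)

/-- Identification of 2×2 matrices with Euclidean space on `Fin 2 × Fin 2`. -/
noncomputable def toE (X : Matrix (Fin 2) (Fin 2) ℝ) : EuclideanSpace ℝ (Fin 2 × Fin 2) :=
  (WithLp.equiv 2 _).symm fun p => X p.1 p.2

lemma toE_sub (A B : Matrix (Fin 2) (Fin 2) ℝ) : toE (A - B) = toE A - toE B := by
  ext p; simp [toE]

lemma frob_eq (X : Matrix (Fin 2) (Fin 2) ℝ) : frob X = ‖toE X‖ := by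
  rw [EuclideanSpace.norm_eq]
  refine congrArg Real.sqrt ?_
  rw [frobSq, Fintype.sum_prod_type]
  refine Finset.sum_congr rfl fun i _ => Finset.sum_congr rfl fun j _ => ?_
  rw [Real.norm_eq_abs, sq_abs]
  simp [toE]

/-- If `π X` minimizes `‖X − W‖_F²` over `W ∈ SO(2)`, then for any `R ∈ SO(2)`,
`‖π X − R‖_F ≤ 2 ‖X − R‖_F`. -/
theorem stmt0 (X piX : Matrix (Fin 2) (Fin 2) ℝ)
    (hpi : SO2 piX)
    (hmin : ∀ W : Matrix (Fin 2) (Fin 2) ℝ, SO2 W → frobSq (X - piX) ≤ frobSq (X - W)) :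
    ∀ R : Matrix (Fin 2) (Fin 2) ℝ, SO2 R → frob (piX - R) ≤ 2 * frob (X - R) := by
  intro R hR
  have h1 : frob (piX - R) ≤ frob (piX - X) + frob (X - R) := by
    rw [frob_eq, frob_eq, frob_eq, toE_sub, toE_sub, toE_sub]
    exact norm_sub_le_norm_sub_add_norm_sub _ _ _
  have h2 : frob (piX - X) ≤ frob (X - R) := by
    have hs : frobSq (piX - X) = frobSq (X - piX) := by
      simp [frobSq, Matrix.sub_apply]
      ring_nf
    unfold frob
    rw [hs]
    exact Real.sqrt_le_sqrt (hmin R hR)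
  linarith
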